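/- Let H be a complex Hilbert space, F a finite index set, and for each m ∈ F let λ_m : ℝ² → ℝ and Π_m : ℝ² → B(H) be continuously differentiable, with Π_m(z) Π_k(z) = δ_{mk} Π_m(z) for all z ∈ ℝ² and all m,k ∈ F. Let β : ℝ² → ℂ be continuously differentiable and set T := Σ_{m∈F} λ_m Π_m. Then for all n, k ∈ F and all z = (s,σ) ∈ ℝ²: Π_k(z) ( {T, β Π_n}(z) − {β Π_n, T}(z) ) Π_k(z) = δ_{kn} ( {λ_n, β}(z) − {β, λ_n}(z) ) Π_n(z), where {f,g} := ∂_σ f · ∂_s g − ∂_s f · ∂_σ g (operator products where applicable). -/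

import Mathlib

noncomputable section

/-- Operator-valued Poisson bracket on `ℝ²_{s,σ}`: `{f,g} = ∂_σ f ∘ ∂_s g − ∂_s f ∘ ∂_σ g`. -/
def pb2 {H : Type*} [NormedAddCommGroup H] [InnerProductSpace ℂ H]
    (f g : ℝ × ℝ → (H →L[ℂ] H)) (z : ℝ × ℝ) : H →L[ℂ] H :=
  fderiv ℝ f z (0, 1) * fderiv ℝ g z (1, 0) - fderiv ℝ f z (1, 0) * fderiv ℝ g z (0, 1)

/-- Scalar Poisson bracket on `ℝ²_{s,σ}`. -/
def pb2s (f g : ℝ × ℝ → ℂ) (z : ℝ × ℝ) : ℂ :=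
  fderiv ℝ f z (0, 1) * fderiv ℝ g z (1, 0) - fderiv ℝ f z (1, 0) * fderiv ℝ g z (0, 1)

private lemma mulrel {A : Type*} [NormedRing A] [NormedAlgebra ℝ A] {f g h : ℝ × ℝ → A}
    {z : ℝ × ℝ} (hf : DifferentiableAt ℝ f z) (hg : DifferentiableAt ℝ g z)
    (hfg : ∀ w, f w * g w = h w) (v : ℝ × ℝ) :
    f z * fderiv ℝ g z v + fderiv ℝ f z v * g z = fderiv ℝ h z v := by
  have hh : (fun w => f w * g w) = h := funext hfg
  rw [← hh, show (fun w => f w * g w) = f * g from rfl, fderiv_mul' hf hg]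
  simp

private lemma alg_eq {A : Type*} [Ring A] [Algebra ℂ A]
    (Q Q1 Q2 T T1 T2 : A) (c c1 c2 b b1 b2 : ℂ)
    (e1 : Q * Q = Q)
    (e2_1 : Q * Q1 + Q1 * Q = Q1) (e2_2 : Q * Q2 + Q2 * Q = Q2)
    (e3 : Q * T = c • Q) (e4 : T * Q = c • Q)
    (e5_1 : Q * T1 + Q1 * T = c • Q1 + c1 • Q)
    (e5_2 : Q * T2 + Q2 * T = c • Q2 + c2 • Q)
    (e6_1 : T * Q1 + T1 * Q = c • Q1 + c1 • Q)
    (e6_2 : T * Q2 + T2 * Q = c • Q2 + c2 • Q) :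
    Q * ((T2 * (b • Q1 + b1 • Q) - T1 * (b • Q2 + b2 • Q))
        - ((b • Q2 + b2 • Q) * T1 - (b • Q1 + b1 • Q) * T2)) * Q
      = ((c2 * b1 - c1 * b2) - (b2 * c1 - b1 * c2)) • Q := by
  clear e3
  linear_combination (norm := (simp only [smul_smul, smul_mul_assoc, mul_smul_comm, mul_add,
      add_mul, mul_sub, sub_mul, smul_add, smul_sub, zero_mul, mul_zero, smul_zero, zero_smul,
      add_zero, zero_add, mul_assoc]; module))
    (2*(b1*c2 - b2*c1)) • e1
    + (-b2) • (e1 * (T1*Q))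
    + b1 • (e1 * (T2*Q))
    + (b*c2) • (e2_1 * Q)
    + b • (e2_1 * (T2*Q))
    - (b*c1) • (e2_2 * Q)
    - b • (e2_2 * (T1*Q))
    - (2*b2) • (e5_1 * Q)
    - b • (e5_1 * (Q2*Q))
    + (2*b1) • (e5_2 * Q)
    + b • (e5_2 * (Q1*Q))
    - b2 • ((Q*T1) * e1)
    + b1 • ((Q*T2) * e1)
    - (b*c2) • (Q1 * e1)
    + (2*b2) • (Q1 * e4)
    - b • (Q1 * e5_2 * Q)
    + b • (Q1 * e6_2 * Q)
    + b • ((Q1*Q2) * e4)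
    - b • ((Q1*T2) * e1)
    + (b*c1) • (Q2 * e1)
    - (2*b1) • (Q2 * e4)
    + b • (Q2 * e5_1 * Q)
    - b • (Q2 * e6_1 * Q)
    - b • ((Q2*Q1) * e4)
    + b • ((Q2*T1) * e1)

private lemma alg_ne {A : Type*} [Ring A] [Algebra ℂ A]
    (Q N Q1 Q2 N1 N2 T T1 T2 : A) (ck ck1 ck2 cn cn1 cn2 b b1 b2 : ℂ)
    (f3 : Q * N = 0) (f4 : N * Q = 0)
    (f5_1 : Q * N1 + Q1 * N = 0) (f5_2 : Q * N2 + Q2 * N = 0)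
    (f6_1 : N * Q1 + N1 * Q = 0) (f6_2 : N * Q2 + N2 * Q = 0)
    (f9 : N * T = cn • N)
    (f11_1 : Q * T1 + Q1 * T = ck • Q1 + ck1 • Q)
    (f11_2 : Q * T2 + Q2 * T = ck • Q2 + ck2 • Q)
    (f12_1 : T * Q1 + T1 * Q = ck • Q1 + ck1 • Q)
    (f12_2 : T * Q2 + T2 * Q = ck • Q2 + ck2 • Q)
    (f14_1 : T * N1 + T1 * N = cn • N1 + cn1 • N)
    (f14_2 : T * N2 + T2 * N = cn • N2 + cn2 • N) :
    Q * ((T2 * (b • N1 + b1 • N) - T1 * (b • N2 + b2 • N))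
        - ((b • N2 + b2 • N) * T1 - (b • N1 + b1 • N) * T2)) * Q = 0 := by
  linear_combination (norm := (simp only [smul_smul, smul_mul_assoc, mul_smul_comm, mul_add,
      add_mul, mul_sub, sub_mul, smul_add, smul_sub, zero_mul, mul_zero, smul_zero, zero_smul,
      add_zero, zero_add, mul_assoc]; module))
    (-b) • (f11_1 * (N2*Q))
    + b • (f11_2 * (N1*Q))
    - b2 • (f3 * (T1*Q))
    + b1 • (f3 * (T2*Q))
    + (b*ck2) • (f5_1 * Q)
    + b • (f5_1 * (T2*Q))
    - (b*ck1) • (f5_2 * Q)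
    - b • (f5_2 * (T1*Q))
    - b2 • ((Q*T1) * f4)
    + b1 • ((Q*T2) * f4)
    + b • (Q1 * f14_2 * Q)
    + (b*cn2 - 2*(b*ck2)) • (Q1 * f4)
    + (b*cn - b*ck) • (Q1 * f6_2)
    + b • (Q1 * f9 * Q2)
    - b • ((Q1*N) * f12_2)
    - b • ((Q1*T2) * f4)
    - b • (Q2 * f14_1 * Q)
    + (2*(b*ck1) - b*cn1) • (Q2 * f4)
    + (b*ck - b*cn) • (Q2 * f6_1)
    - b • (Q2 * f9 * Q1)
    + b • ((Q2*N) * f12_1)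
    + b • ((Q2*T1) * f4)

/-- for `T = Σ_m λ_m Π_m` with a pairwise orthogonal C¹ family of
projections and scalar `β`,
`Π_k({T, βΠ_n} − {βΠ_n, T})Π_k = δ_{kn}({λ_n,β} − {β,λ_n})Π_n`. -/
theorem stmt12 {H : Type*} [NormedAddCommGroup H] [InnerProductSpace ℂ H] [CompleteSpace H]
    {F : Type*} [Fintype F] [DecidableEq F]
    (lam : F → ℝ × ℝ → ℝ) (P : F → ℝ × ℝ → (H →L[ℂ] H))
    (hlam : ∀ m, ContDiff ℝ 1 (lam m)) (hP : ∀ m, ContDiff ℝ 1 (P m))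
    (hidem : ∀ m z, P m z * P m z = P m z)
    (horth : ∀ m k, m ≠ k → ∀ z, P m z * P k z = 0)
    (β : ℝ × ℝ → ℂ) (hβ : ContDiff ℝ 1 β)
    (T : ℝ × ℝ → (H →L[ℂ] H))
    (hT : T = fun z => ∑ m : F, ((lam m z : ℝ) : ℂ) • P m z) :
    ∀ (n k : F) (z : ℝ × ℝ),
      P k z * (pb2 T (fun w => β w • P n w) z - pb2 (fun w => β w • P n w) T z) * P k z
        = if k = n then
            (pb2s (fun w => ((lam n w : ℝ) : ℂ)) β z
              - pb2s β (fun w => ((lam n w : ℝ) : ℂ)) z) • P n z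
          else 0 := by
  intro n k z
  have hdP : ∀ m, DifferentiableAt ℝ (P m) z :=
    fun m => ((hP m).differentiable one_ne_zero).differentiableAt
  have hdlam : ∀ m, DifferentiableAt ℝ (lam m) z :=
    fun m => ((hlam m).differentiable one_ne_zero).differentiableAt
  have hdβ : DifferentiableAt ℝ β z := (hβ.differentiable one_ne_zero).differentiableAt
  have hdlamC : ∀ m, DifferentiableAt ℝ (fun w => ((lam m w : ℝ) : ℂ)) z :=
    fun m => Complex.ofRealCLM.differentiableAt.comp z (hdlam m)
  have hdT : DifferentiableAt ℝ T z := by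
    rw [hT]
    exact DifferentiableAt.fun_sum fun m _ => (hdlamC m).smul (hdP m)
  have hTP : ∀ m w, T w * P m w = ((lam m w : ℝ) : ℂ) • P m w := by
    intro m w
    rw [hT]
    simp only [Finset.sum_mul, smul_mul_assoc]
    rw [Finset.sum_eq_single m (fun j _ hj => by rw [horth j m hj, smul_zero])
        (fun h => absurd (Finset.mem_univ m) h), hidem]
  have hPT : ∀ m w, P m w * T w = ((lam m w : ℝ) : ℂ) • P m w := by
    intro m w
    rw [hT]
    simp only [Finset.mul_sum, mul_smul_comm]
    rw [Finset.sum_eq_single m (fun j _ hj => by rw [horth m j (Ne.symm hj), smul_zero])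
        (fun h => absurd (Finset.mem_univ m) h), hidem]
  have hfd_lamC : ∀ m v, fderiv ℝ (fun w => ((lam m w : ℝ) : ℂ)) z v
      = ((fderiv ℝ (lam m) z v : ℝ) : ℂ) := by
    intro m v
    have h := (Complex.ofRealCLM.hasFDerivAt.comp z (hdlam m).hasFDerivAt).fderiv
    simp only [Function.comp_def] at h
    rw [show (fun w => ((lam m w : ℝ) : ℂ)) = fun w => Complex.ofRealCLM (lam m w) from rfl, h]
    simp
  have hfd_lamP : ∀ m v, fderiv ℝ (fun w => ((lam m w : ℝ) : ℂ) • P m w) z v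
      = ((lam m z : ℝ) : ℂ) • fderiv ℝ (P m) z v
        + ((fderiv ℝ (lam m) z v : ℝ) : ℂ) • P m z := by
    intro m v
    rw [fderiv_fun_smul (hdlamC m) (hdP m)]
    simp only [ContinuousLinearMap.add_apply, ContinuousLinearMap.smul_apply,
      ContinuousLinearMap.smulRight_apply, hfd_lamC m v]
  have hfd_g : ∀ v, fderiv ℝ (fun w => β w • P n w) z v
      = β z • fderiv ℝ (P n) z v + fderiv ℝ β z v • P n z := by
    intro v
    rw [fderiv_fun_smul hdβ (hdP n)]
    simp only [ContinuousLinearMap.add_apply, ContinuousLinearMap.smul_apply,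
      ContinuousLinearMap.smulRight_apply]
  have dproj : ∀ m v, P m z * fderiv ℝ (P m) z v + fderiv ℝ (P m) z v * P m z
      = fderiv ℝ (P m) z v := fun m v => mulrel (hdP m) (hdP m) (fun w => hidem m w) v
  have dorth : ∀ m j, m ≠ j → ∀ v,
      P m z * fderiv ℝ (P j) z v + fderiv ℝ (P m) z v * P j z = 0 := by
    intro m j hmj v
    have h := mulrel (h := fun _ => (0 : H →L[ℂ] H)) (hdP m) (hdP j)
      (fun w => horth m j hmj w) v
    simpa using h
  have dTP : ∀ m v, T z * fderiv ℝ (P m) z v + fderiv ℝ T z v * P m z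
      = ((lam m z : ℝ) : ℂ) • fderiv ℝ (P m) z v
        + ((fderiv ℝ (lam m) z v : ℝ) : ℂ) • P m z := by
    intro m v
    rw [mulrel hdT (hdP m) (hTP m) v, hfd_lamP m v]
  have dPT : ∀ m v, P m z * fderiv ℝ T z v + fderiv ℝ (P m) z v * T z
      = ((lam m z : ℝ) : ℂ) • fderiv ℝ (P m) z v
        + ((fderiv ℝ (lam m) z v : ℝ) : ℂ) • P m z := by
    intro m v
    rw [mulrel (hdP m) hdT (hPT m) v, hfd_lamP m v]
  simp only [pb2, pb2s]
  rw [hfd_g (1, 0), hfd_g (0, 1), hfd_lamC n (1, 0), hfd_lamC n (0, 1)]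
  split_ifs with hkn
  · subst hkn
    exact alg_eq (P k z) (fderiv ℝ (P k) z (1, 0)) (fderiv ℝ (P k) z (0, 1)) (T z)
      (fderiv ℝ T z (1, 0)) (fderiv ℝ T z (0, 1))
      ((lam k z : ℝ) : ℂ) ((fderiv ℝ (lam k) z (1, 0) : ℝ) : ℂ)
      ((fderiv ℝ (lam k) z (0, 1) : ℝ) : ℂ)
      (β z) (fderiv ℝ β z (1, 0)) (fderiv ℝ β z (0, 1))
      (hidem k z) (dproj k (1, 0)) (dproj k (0, 1)) (hPT k z) (hTP k z)
      (dPT k (1, 0)) (dPT k (0, 1)) (dTP k (1, 0)) (dTP k (0, 1))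
  · exact alg_ne (P k z) (P n z) (fderiv ℝ (P k) z (1, 0)) (fderiv ℝ (P k) z (0, 1))
      (fderiv ℝ (P n) z (1, 0)) (fderiv ℝ (P n) z (0, 1)) (T z)
      (fderiv ℝ T z (1, 0)) (fderiv ℝ T z (0, 1))
      ((lam k z : ℝ) : ℂ) ((fderiv ℝ (lam k) z (1, 0) : ℝ) : ℂ)
      ((fderiv ℝ (lam k) z (0, 1) : ℝ) : ℂ)
      ((lam n z : ℝ) : ℂ) ((fderiv ℝ (lam n) z (1, 0) : ℝ) : ℂ)
      ((fderiv ℝ (lam n) z (0, 1) : ℝ) : ℂ)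
      (β z) (fderiv ℝ β z (1, 0)) (fderiv ℝ β z (0, 1))
      (horth k n hkn z) (horth n k (Ne.symm hkn) z)
      (dorth k n hkn (1, 0)) (dorth k n hkn (0, 1))
      (dorth n k (Ne.symm hkn) (1, 0)) (dorth n k (Ne.symm hkn) (0, 1))
      (hPT n z)
      (dPT k (1, 0)) (dPT k (0, 1)) (dTP k (1, 0)) (dTP k (0, 1))
      (dTP n (1, 0)) (dTP n (0, 1))
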